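/- In the polynomial ring A[w], the additive polynomials f(w) = x·w + (x² + x)·w² + w⁴ and g(w) = y·w + (y² + y)·w² + x·(y² + y)·w⁴ + w⁸ commute under composition: f(g(w)) = g(f(w)). (These are the actions ρ_x and ρ_y of the rank-one Drinfeld module over A.) -/

import Mathlib

noncomputable section

open Polynomial

/-- The defining polynomial `Y² + Y + (X³ + X + 1)` over `𝔽₂[X]`,
viewed as a polynomial in `Y` with coefficients in `𝔽₂[X]`. -/
def curveEq : Polynomial (Polynomial (ZMod 2)) :=
  X ^ 2 + X + C (X ^ 3 + X + 1)

/-- The ring `A = 𝔽₂[X,Y]/(Y² + Y + X³ + X + 1)`. -/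
abbrev A : Type := AdjoinRoot curveEq

/-- The image `x` of `X` in `A`. -/
def aX : A := AdjoinRoot.of curveEq (X : Polynomial (ZMod 2))

/-- The image `y` of `Y` in `A`. -/
def aY : A := AdjoinRoot.root curveEq

/-- The action of the Drinfeld module on `x`, as a polynomial in `A[w]`:
`ρ_x(w) = x·w + (x² + x)·w² + w⁴`. -/
def rhoX : Polynomial A := C aX * X + C (aX ^ 2 + aX) * X ^ 2 + X ^ 4

/-- The action of the Drinfeld module on `y`, as a polynomial in `A[w]`:
`ρ_y(w) = y·w + (y² + y)·w² + x·(y² + y)·w⁴ + w⁸`. -/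
def rhoY : Polynomial A :=
  C aY * X + C (aY ^ 2 + aY) * X ^ 2 + C (aX * (aY ^ 2 + aY)) * X ^ 4 + X ^ 8

lemma two_eq_zero_A : (2 : A) = 0 := by
  have h : (2 : Polynomial (ZMod 2)) = 0 := by
    rw [← map_ofNat (C : ZMod 2 →+* _) 2, show (2 : ZMod 2) = 0 from rfl, map_zero]
  calc (2 : A) = AdjoinRoot.of curveEq (2 : Polynomial (ZMod 2)) := by rw [map_ofNat]
  _ = 0 := by rw [h, map_zero]

lemma root_rel : aY ^ 2 + aY + (aX ^ 3 + aX + 1) = 0 := by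
  have h : eval₂ (AdjoinRoot.of curveEq) (AdjoinRoot.root curveEq)
      (X ^ 2 + X + C (X ^ 3 + X + 1)) = 0 := AdjoinRoot.eval₂_root curveEq
  simp only [eval₂_add, eval₂_pow, eval₂_X, eval₂_C, eval₂_one, map_add, map_pow,
    map_one] at h
  unfold aX aY
  linear_combination h

set_option maxHeartbeats 4000000 in
/-- The key generic identity: in any commutative ring `S` of characteristic `2` with
elements `u`, `v` satisfying `v² + v + u³ + u + 1 = 0`, the two additive-polynomial
expressions commute (here `w` plays the role of the polynomial variable). -/
lemma gen_commute {S : Type*} [CommRing S] (u v w : S) (h2 : (2 : S) = 0)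
    (h : v ^ 2 + v + (u ^ 3 + u + 1) = 0) :
    u * (v * w + (v ^ 2 + v) * w ^ 2 + u * (v ^ 2 + v) * w ^ 4 + w ^ 8)
      + (u ^ 2 + u) * (v * w + (v ^ 2 + v) * w ^ 2 + u * (v ^ 2 + v) * w ^ 4 + w ^ 8) ^ 2
      + (v * w + (v ^ 2 + v) * w ^ 2 + u * (v ^ 2 + v) * w ^ 4 + w ^ 8) ^ 4 =
    v * (u * w + (u ^ 2 + u) * w ^ 2 + w ^ 4)
      + (v ^ 2 + v) * (u * w + (u ^ 2 + u) * w ^ 2 + w ^ 4) ^ 2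
      + u * (v ^ 2 + v) * (u * w + (u ^ 2 + u) * w ^ 2 + w ^ 4) ^ 4
      + (u * w + (u ^ 2 + u) * w ^ 2 + w ^ 4) ^ 8 := by
  linear_combination ((v * w ^ 4 + v * w ^ 8 + v ^ 2 * w ^ 4 + v ^ 3 * w ^ 8 + v ^ 5 * w ^ 8 + v ^ 6 * w ^ 8 + u * w ^ 8 + u * w ^ 16 + u * v * w ^ 4 + u * v ^ 2 * w ^ 4 + u * v ^ 2 * w ^ 8 + u * v ^ 4 * w ^ 8 + u ^ 2 * w ^ 8 + u ^ 2 * v * w ^ 4 + u ^ 2 * v * w ^ 8 + u ^ 2 * v ^ 2 * w ^ 4 + u ^ 2 * v ^ 2 * w ^ 8 + u ^ 3 * w ^ 8 + u ^ 3 * v * w ^ 8 + u ^ 3 * v ^ 4 * w ^ 8 + u ^ 4 * w ^ 16 + u ^ 4 * v * w ^ 8 + u ^ 4 * v * w ^ 16 + u ^ 4 * v ^ 2 * w ^ 8 + u ^ 4 * v ^ 3 * w ^ 16 + u ^ 4 * v ^ 5 * w ^ 16 + u ^ 4 * v ^ 6 * w ^ 16 + u ^ 5 * w ^ 8 + u ^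 5 * w ^ 16 + u ^ 5 * v ^ 2 * w ^ 16 + u ^ 5 * v ^ 4 * w ^ 16 + u ^ 6 * w ^ 16 + u ^ 6 * v * w ^ 8 + u ^ 6 * v * w ^ 16 + u ^ 6 * v ^ 2 * w ^ 8 + u ^ 6 * v ^ 2 * w ^ 16 + u ^ 7 * v ^ 2 * w ^ 16 + u ^ 7 * v ^ 4 * w ^ 16 + u ^ 9 * w ^ 16 + u ^ 10 * w ^ 16 + u ^ 10 * v * w ^ 16 + u ^ 10 * v ^ 2 * w ^ 16 + u ^ 11 * w ^ 16 + u ^ 13 * w ^ 16)) * h + ((-(v * w ^ 4) + -(v * w ^ 8) + 2 • (v * w ^ 25) + 2 • (v * w ^ 26) + -(v ^ 2 * w ^ 4) + -(v ^ 2 * w ^ 8) + 3 • (v ^ 2 * w ^ 18) + 6 • (v ^ 2 * w ^ 19) + 3 • (v ^ 2 * w ^ 20) + 2 • (v ^ 2 * w ^ 26) + -(v ^ 3 * w ^ 4) + -(v ^ 3 * w ^ 8) + 2 • (v ^ 3 * w ^ 11) + 6 • (v ^ 3 * w ^ 12) + 6 • (v ^ 3 * w ^ 13) + 2 • (v ^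 3 * w ^ 14) + 6 • (v ^ 3 * w ^ 19) + 6 • (v ^ 3 * w ^ 20) + 2 • (v ^ 4 * w ^ 5) + 3 • (v ^ 4 * w ^ 6) + 2 • (v ^ 4 * w ^ 7) + 6 • (v ^ 4 * w ^ 12) + 12 • (v ^ 4 * w ^ 13) + 6 • (v ^ 4 * w ^ 14) + 3 • (v ^ 4 * w ^ 20) + 2 • (v ^ 5 * w ^ 5) + 6 • (v ^ 5 * w ^ 6) + 6 • (v ^ 5 * w ^ 7) + v ^ 5 * w ^ 8 + 6 • (v ^ 5 * w ^ 13) + 6 • (v ^ 5 * w ^ 14) + 3 • (v ^ 6 * w ^ 6) + 6 • (v ^ 6 * w ^ 7) + 2 • (v ^ 6 * w ^ 8) + 2 • (v ^ 6 * w ^ 14) + 2 • (v ^ 7 * w ^ 7) + v ^ 7 * w ^ 8 + -(4 • (u * w ^ 29)) + -(4 • (u * w ^ 30)) + -(u * v * w ^ 4) + -(u * v * w ^ 5) + -(u * v * w ^ 6) + -(u * v * w ^ 8) + u * v * w ^ 9 + u * v * w ^ 10 + -(u * v * w ^ 16) + 2 • (u * v * w ^ 28) + u * v ^ 2 * w ^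 2 + u * v ^ 2 * w ^ 3 + -(u * v ^ 2 * w ^ 4) + -(u * v ^ 2 * w ^ 5) + -(u * v ^ 2 * w ^ 6) + -(u * v ^ 2 * w ^ 8) + u * v ^ 2 * w ^ 10 + -(u * v ^ 2 * w ^ 16) + 6 • (u * v ^ 2 * w ^ 21) + 6 • (u * v ^ 2 * w ^ 22) + 2 • (u * v ^ 2 * w ^ 28) + u * v ^ 3 * w ^ 3 + -(u * v ^ 3 * w ^ 8) + 6 • (u * v ^ 3 * w ^ 14) + 12 • (u * v ^ 3 * w ^ 15) + 6 • (u * v ^ 3 * w ^ 16) + 6 • (u * v ^ 3 * w ^ 21) + 12 • (u * v ^ 3 * w ^ 22) + 2 • (u * v ^ 4 * w ^ 7) + 5 • (u * v ^ 4 * w ^ 8) + 6 • (u * v ^ 4 * w ^ 9) + 2 • (u * v ^ 4 * w ^ 10) + 6 • (u * v ^ 4 * w ^ 14) + 24 • (u * v ^ 4 * w ^ 15) + 18 • (u * v ^ 4 * w ^ 16) + 6 • (u * v ^ 4 * w ^ 22) + 2 • (u * v ^ 5 * w ^ 7) + 11 • (u * v ^ 5 * w ^ 8) + 18 • (u * v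 ^ 5 * w ^ 9) + 8 • (u * v ^ 5 * w ^ 10) + 12 • (u * v ^ 5 * w ^ 15) + 18 • (u * v ^ 5 * w ^ 16) + 5 • (u * v ^ 6 * w ^ 8) + 18 • (u * v ^ 6 * w ^ 9) + 12 • (u * v ^ 6 * w ^ 10) + 6 • (u * v ^ 6 * w ^ 16) + 6 • (u * v ^ 7 * w ^ 9) + 8 • (u * v ^ 7 * w ^ 10) + 2 • (u * v ^ 8 * w ^ 10) + -(u ^ 2 * w ^ 8) + -(14 • (u ^ 2 * w ^ 26)) + -(28 • (u ^ 2 * w ^ 27)) + -(14 • (u ^ 2 * w ^ 28)) + -(4 • (u ^ 2 * w ^ 30)) + -(u ^ 2 * v * w ^ 2) + -(u ^ 2 * v * w ^ 3) + -(u ^ 2 * v * w ^ 4) + -(u ^ 2 * v * w ^ 6) + -(u ^ 2 * v * w ^ 8) + u ^ 2 * v * w ^ 9 + u ^ 2 * v * w ^ 10 + u ^ 2 * v * w ^ 12 + -(2 • (u ^ 2 * v * w ^ 13)) + -(2 • (u ^ 2 * v * w ^ 14)) + -(u ^ 2 * v ^ 2 * w ^ 4) + u ^ 2 * v ^ 2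 * w ^ 5 + -(2 • (u ^ 2 * v ^ 2 * w ^ 8)) + u ^ 2 * v ^ 2 * w ^ 10 + u ^ 2 * v ^ 2 * w ^ 12 + -(2 • (u ^ 2 * v ^ 2 * w ^ 13)) + -(2 • (u ^ 2 * v ^ 2 * w ^ 14)) + 3 • (u ^ 2 * v ^ 2 * w ^ 24) + u ^ 2 * v ^ 3 * w ^ 3 + u ^ 2 * v ^ 3 * w ^ 5 + 2 • (u ^ 2 * v ^ 3 * w ^ 6) + -(u ^ 2 * v ^ 3 * w ^ 8) + 6 • (u ^ 2 * v ^ 3 * w ^ 17) + 6 • (u ^ 2 * v ^ 3 * w ^ 18) + 6 • (u ^ 2 * v ^ 3 * w ^ 24) + u ^ 2 * v ^ 4 * w ^ 6 + -(u ^ 2 * v ^ 4 * w ^ 8) + 3 • (u ^ 2 * v ^ 4 * w ^ 10) + 6 • (u ^ 2 * v ^ 4 * w ^ 11) + 3 • (u ^ 2 * v ^ 4 * w ^ 12) + 12 • (u ^ 2 * v ^ 4 * w ^ 17) + 18 • (u ^ 2 * v ^ 4 * w ^ 18) + 3 • (u ^ 2 * v ^ 4 * w ^ 24) + 6 • (u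 ^ 2 * v ^ 5 * w ^ 10) + 18 • (u ^ 2 * v ^ 5 * w ^ 11) + 12 • (u ^ 2 * v ^ 5 * w ^ 12) + 6 • (u ^ 2 * v ^ 5 * w ^ 17) + 18 • (u ^ 2 * v ^ 5 * w ^ 18) + 3 • (u ^ 2 * v ^ 6 * w ^ 10) + 18 • (u ^ 2 * v ^ 6 * w ^ 11) + 18 • (u ^ 2 * v ^ 6 * w ^ 12) + 6 • (u ^ 2 * v ^ 6 * w ^ 18) + 6 • (u ^ 2 * v ^ 7 * w ^ 11) + 12 • (u ^ 2 * v ^ 7 * w ^ 12) + 3 • (u ^ 2 * v ^ 8 * w ^ 12) + -(u ^ 3 * w ^ 8) + -(28 • (u ^ 3 * w ^ 23)) + -(84 • (u ^ 3 * w ^ 24)) + -(84 • (u ^ 3 * w ^ 25)) + -(28 • (u ^ 3 * w ^ 26)) + -(28 • (u ^ 3 * w ^ 27)) + -(28 • (u ^ 3 * w ^ 28)) + -(u ^ 3 * v * w ^ 3) + -(2 • (u ^ 3 * v * w ^ 4)) + -(2 • (u ^ 3 * v * w ^ 8)) + -(3 • (u ^ 3 * v * w ^ 10)) + -(6 • (u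 ^ 3 * v * w ^ 11)) + -(2 • (u ^ 3 * v * w ^ 12)) + -(2 • (u ^ 3 * v * w ^ 14)) + -(u ^ 3 * v ^ 2 * w ^ 3) + -(2 • (u ^ 3 * v ^ 2 * w ^ 4)) + u ^ 3 * v ^ 2 * w ^ 5 + u ^ 3 * v ^ 2 * w ^ 6 + -(u ^ 3 * v ^ 2 * w ^ 8) + -(3 • (u ^ 3 * v ^ 2 * w ^ 10)) + -(6 • (u ^ 3 * v ^ 2 * w ^ 11)) + -(2 • (u ^ 3 * v ^ 2 * w ^ 12)) + -(2 • (u ^ 3 * v ^ 2 * w ^ 14)) + u ^ 3 * v ^ 3 * w ^ 5 + 2 • (u ^ 3 * v ^ 3 * w ^ 6) + 2 • (u ^ 3 * v ^ 3 * w ^ 20) + u ^ 3 * v ^ 4 * w ^ 6 + 2 • (u ^ 3 * v ^ 4 * w ^ 13) + 2 • (u ^ 3 * v ^ 4 * w ^ 14) + 6 • (u ^ 3 * v ^ 4 * w ^ 20) + -(u ^ 3 * v ^ 5 * w ^ 8) + 6 • (u ^ 3 * v ^ 5 * w ^ 13) + 8 • (u ^ 3 * v ^ 5 * w ^ 14)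 + 6 • (u ^ 3 * v ^ 5 * w ^ 20) + -(u ^ 3 * v ^ 6 * w ^ 8) + 6 • (u ^ 3 * v ^ 6 * w ^ 13) + 12 • (u ^ 3 * v ^ 6 * w ^ 14) + 2 • (u ^ 3 * v ^ 6 * w ^ 20) + 2 • (u ^ 3 * v ^ 7 * w ^ 13) + 8 • (u ^ 3 * v ^ 7 * w ^ 14) + 2 • (u ^ 3 * v ^ 8 * w ^ 14) + -(u ^ 4 * w ^ 8) + -(u ^ 4 * w ^ 16) + -(35 • (u ^ 4 * w ^ 20)) + -(140 • (u ^ 4 * w ^ 21)) + -(210 • (u ^ 4 * w ^ 22)) + -(140 • (u ^ 4 * w ^ 23)) + -(119 • (u ^ 4 * w ^ 24)) + -(168 • (u ^ 4 * w ^ 25)) + -(84 • (u ^ 4 * w ^ 26)) + -(14 • (u ^ 4 * w ^ 28)) + -(u ^ 4 * v * w ^ 4) + -(2 • (u ^ 4 * v * w ^ 7)) + -(7 • (u ^ 4 * v * w ^ 8)) + -(6 • (u ^ 4 * v * w ^ 9)) + -(2 • (u ^ 4 * v * w ^ 10)) + -(6 • (u ^ 4 * v * w ^ 11)) + -(6 •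 (u ^ 4 * v * w ^ 12)) + -(u ^ 4 * v * w ^ 16) + -(u ^ 4 * v ^ 2 * w ^ 4) + -(2 • (u ^ 4 * v ^ 2 * w ^ 7)) + -(7 • (u ^ 4 * v ^ 2 * w ^ 8)) + -(6 • (u ^ 4 * v ^ 2 * w ^ 9)) + -(2 • (u ^ 4 * v ^ 2 * w ^ 10)) + -(6 • (u ^ 4 * v ^ 2 * w ^ 11)) + -(6 • (u ^ 4 * v ^ 2 * w ^ 12)) + -(u ^ 4 * v ^ 2 * w ^ 16) + -(u ^ 4 * v ^ 3 * w ^ 16) + -(u ^ 4 * v ^ 4 * w ^ 8) + u ^ 4 * v ^ 5 * w ^ 16 + 2 • (u ^ 4 * v ^ 6 * w ^ 16) + u ^ 4 * v ^ 7 * w ^ 16 + -(u ^ 5 * w ^ 8) + -(u ^ 5 * w ^ 16) + -(28 • (u ^ 5 * w ^ 17)) + -(140 • (u ^ 5 * w ^ 18)) + -(280 • (u ^ 5 * w ^ 19)) + -(280 • (u ^ 5 * w ^ 20)) + -(280 • (u ^ 5 * w ^ 21)) + -(448 • (u ^ 5 * w ^ 22)) + -(420 • (u ^ 5 * w ^ 23))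 + -(140 • (u ^ 5 * w ^ 24)) + -(84 • (u ^ 5 * w ^ 25)) + -(84 • (u ^ 5 * w ^ 26)) + -(u ^ 5 * v * w ^ 4) + -(2 • (u ^ 5 * v * w ^ 5)) + -(3 • (u ^ 5 * v * w ^ 6)) + -(2 • (u ^ 5 * v * w ^ 7)) + -(8 • (u ^ 5 * v * w ^ 8)) + -(12 • (u ^ 5 * v * w ^ 9)) + -(6 • (u ^ 5 * v * w ^ 10)) + -(3 • (u ^ 5 * v * w ^ 12)) + -(u ^ 5 * v * w ^ 16) + -(u ^ 5 * v ^ 2 * w ^ 4) + -(2 • (u ^ 5 * v ^ 2 * w ^ 5)) + -(3 • (u ^ 5 * v ^ 2 * w ^ 6)) + -(2 • (u ^ 5 * v ^ 2 * w ^ 7)) + -(8 • (u ^ 5 * v ^ 2 * w ^ 8)) + -(12 • (u ^ 5 * v ^ 2 * w ^ 9)) + -(6 • (u ^ 5 * v ^ 2 * w ^ 10)) + -(3 • (u ^ 5 * v ^ 2 * w ^ 12)) + -(u ^ 5 * v ^ 2 * w ^ 16) + -(u ^ 5 * v ^ 3 * w ^ 16) + -(u ^ 5 * v ^ 4 * w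 ^ 16) + -(u ^ 5 * v ^ 5 * w ^ 16) + -(u ^ 5 * v ^ 6 * w ^ 16) + -(u ^ 6 * w ^ 8) + -(14 • (u ^ 6 * w ^ 14)) + -(84 • (u ^ 6 * w ^ 15)) + -(211 • (u ^ 6 * w ^ 16)) + -(280 • (u ^ 6 * w ^ 17)) + -(350 • (u ^ 6 * w ^ 18)) + -(644 • (u ^ 6 * w ^ 19)) + -(854 • (u ^ 6 * w ^ 20)) + -(560 • (u ^ 6 * w ^ 21)) + -(350 • (u ^ 6 * w ^ 22)) + -(420 • (u ^ 6 * w ^ 23)) + -(210 • (u ^ 6 * w ^ 24)) + -(28 • (u ^ 6 * w ^ 26)) + -(2 • (u ^ 6 * v * w ^ 5)) + -(6 • (u ^ 6 * v * w ^ 6)) + -(6 • (u ^ 6 * v * w ^ 7)) + -(3 • (u ^ 6 * v * w ^ 8)) + -(6 • (u ^ 6 * v * w ^ 9)) + -(6 • (u ^ 6 * v * w ^ 10)) + -(u ^ 6 * v * w ^ 16) + -(2 • (u ^ 6 * v ^ 2 * w ^ 5)) + -(6 • (u ^ 6 * v ^ 2 * w ^ 6)) + -(6 • (u ^ 6 *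 v ^ 2 * w ^ 7)) + -(3 • (u ^ 6 * v ^ 2 * w ^ 8)) + -(6 • (u ^ 6 * v ^ 2 * w ^ 9)) + -(6 • (u ^ 6 * v ^ 2 * w ^ 10)) + -(2 • (u ^ 6 * v ^ 2 * w ^ 16)) + -(u ^ 6 * v ^ 3 * w ^ 8) + -(u ^ 6 * v ^ 3 * w ^ 16) + -(u ^ 6 * v ^ 4 * w ^ 8) + -(u ^ 6 * v ^ 4 * w ^ 16) + -(4 • (u ^ 7 * w ^ 11)) + -(28 • (u ^ 7 * w ^ 12)) + -(84 • (u ^ 7 * w ^ 13)) + -(140 • (u ^ 7 * w ^ 14)) + -(224 • (u ^ 7 * w ^ 15)) + -(505 • (u ^ 7 * w ^ 16)) + -(868 • (u ^ 7 * w ^ 17)) + -(844 • (u ^ 7 * w ^ 18)) + -(700 • (u ^ 7 * w ^ 19)) + -(924 • (u ^ 7 * w ^ 20)) + -(840 • (u ^ 7 * w ^ 21)) + -(280 • (u ^ 7 * w ^ 22)) + -(140 • (u ^ 7 * w ^ 23)) + -(140 • (u ^ 7 * w ^ 24)) + -(3 • (u ^ 7 * v * w ^ 6)) + -(6 • (u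 ^ 7 * v * w ^ 7)) + -(4 • (u ^ 7 * v * w ^ 8)) + -(2 • (u ^ 7 * v * w ^ 10)) + -(u ^ 7 * v * w ^ 16) + -(3 • (u ^ 7 * v ^ 2 * w ^ 6)) + -(6 • (u ^ 7 * v ^ 2 * w ^ 7)) + -(4 • (u ^ 7 * v ^ 2 * w ^ 8)) + -(2 • (u ^ 7 * v ^ 2 * w ^ 10)) + -(u ^ 7 * v ^ 2 * w ^ 16) + -(u ^ 7 * v ^ 3 * w ^ 16) + -(u ^ 7 * v ^ 4 * w ^ 16) + -(u ^ 7 * v ^ 5 * w ^ 16) + -(u ^ 7 * v ^ 6 * w ^ 16) + -(u ^ 8 * w ^ 8) + -(4 • (u ^ 8 * w ^ 9)) + -(14 • (u ^ 8 * w ^ 10)) + -(28 • (u ^ 8 * w ^ 11)) + -(63 • (u ^ 8 * w ^ 12)) + -(196 • (u ^ 8 * w ^ 13)) + -(434 • (u ^ 8 * w ^ 14)) + -(564 • (u ^ 8 * w ^ 15)) + -(631 • (u ^ 8 * w ^ 16)) + -(1008 • (u ^ 8 * w ^ 17)) + -(1288 • (u ^ 8 * w ^ 18)) + -(840 • (u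 ^ 8 * w ^ 19)) + -(490 • (u ^ 8 * w ^ 20)) + -(560 • (u ^ 8 * w ^ 21)) + -(280 • (u ^ 8 * w ^ 22)) + -(35 • (u ^ 8 * w ^ 24)) + -(2 • (u ^ 8 * v * w ^ 7)) + -(2 • (u ^ 8 * v * w ^ 8)) + -(2 • (u ^ 8 * v ^ 2 * w ^ 7)) + -(2 • (u ^ 8 * v ^ 2 * w ^ 8)) + -(u ^ 8 * v ^ 2 * w ^ 16) + -(u ^ 8 * v ^ 4 * w ^ 16) + -(4 • (u ^ 9 * w ^ 9)) + -(28 • (u ^ 9 * w ^ 10)) + -(84 • (u ^ 9 * w ^ 11)) + -(140 • (u ^ 9 * w ^ 12)) + -(224 • (u ^ 9 * w ^ 13)) + -(504 • (u ^ 9 * w ^ 14)) + -(868 • (u ^ 9 * w ^ 15)) + -(845 • (u ^ 9 * w ^ 16)) + -(700 • (u ^ 9 * w ^ 17)) + -(924 • (u ^ 9 * w ^ 18)) + -(840 • (u ^ 9 * w ^ 19)) + -(280 • (u ^ 9 * w ^ 20)) + -(140 • (u ^ 9 * w ^ 21)) + -(140 • (u ^ 9 * w ^ 22)) + -(u ^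 9 * v * w ^ 8) + -(u ^ 9 * v * w ^ 16) + -(u ^ 9 * v ^ 2 * w ^ 8) + -(u ^ 9 * v ^ 2 * w ^ 16) + -(14 • (u ^ 10 * w ^ 10)) + -(84 • (u ^ 10 * w ^ 11)) + -(210 • (u ^ 10 * w ^ 12)) + -(280 • (u ^ 10 * w ^ 13)) + -(350 • (u ^ 10 * w ^ 14)) + -(644 • (u ^ 10 * w ^ 15)) + -(855 • (u ^ 10 * w ^ 16)) + -(560 • (u ^ 10 * w ^ 17)) + -(350 • (u ^ 10 * w ^ 18)) + -(420 • (u ^ 10 * w ^ 19)) + -(210 • (u ^ 10 * w ^ 20)) + -(28 • (u ^ 10 * w ^ 22)) + -(u ^ 10 * v * w ^ 16) + -(2 • (u ^ 10 * v ^ 2 * w ^ 16)) + -(u ^ 10 * v ^ 3 * w ^ 16) + -(u ^ 10 * v ^ 4 * w ^ 16) + -(28 • (u ^ 11 * w ^ 11)) + -(140 • (u ^ 11 * w ^ 12)) + -(280 • (u ^ 11 * w ^ 13)) + -(280 • (u ^ 11 * w ^ 14)) + -(280 • (u ^ 11 * w ^ 15)) + -(449 • (u ^ 11 * w ^ 16))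 + -(420 • (u ^ 11 * w ^ 17)) + -(140 • (u ^ 11 * w ^ 18)) + -(84 • (u ^ 11 * w ^ 19)) + -(84 • (u ^ 11 * w ^ 20)) + -(u ^ 11 * v * w ^ 16) + -(u ^ 11 * v ^ 2 * w ^ 16) + -(35 • (u ^ 12 * w ^ 12)) + -(140 • (u ^ 12 * w ^ 13)) + -(210 • (u ^ 12 * w ^ 14)) + -(140 • (u ^ 12 * w ^ 15)) + -(120 • (u ^ 12 * w ^ 16)) + -(168 • (u ^ 12 * w ^ 17)) + -(84 • (u ^ 12 * w ^ 18)) + -(14 • (u ^ 12 * w ^ 20)) + -(28 • (u ^ 13 * w ^ 13)) + -(84 • (u ^ 13 * w ^ 14)) + -(84 • (u ^ 13 * w ^ 15)) + -(29 • (u ^ 13 * w ^ 16)) + -(28 • (u ^ 13 * w ^ 17)) + -(28 • (u ^ 13 * w ^ 18)) + -(u ^ 13 * v * w ^ 16) + -(u ^ 13 * v ^ 2 * w ^ 16) + -(14 • (u ^ 14 * w ^ 14)) + -(28 • (u ^ 14 * w ^ 15)) + -(15 • (u ^ 14 * w ^ 16)) + -(4 • (u ^ 14 * w ^ 18)) +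 -(4 • (u ^ 15 * w ^ 15)) + -(4 • (u ^ 15 * w ^ 16)) + -(u ^ 16 * w ^ 16))) * h2

set_option maxHeartbeats 1000000 in
/-- The additive polynomials `ρ_x` and `ρ_y` commute under composition:
`ρ_x(ρ_y(w)) = ρ_y(ρ_x(w))`. -/
theorem stmt3 : rhoX.comp rhoY = rhoY.comp rhoX := by
  have h2 : (2 : Polynomial A) = 0 := by
    rw [← map_ofNat (C : A →+* _) 2, two_eq_zero_A, map_zero]
  have hC : (C aY : Polynomial A) ^ 2 + C aY + ((C aX) ^ 3 + C aX + 1) = 0 := by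
    have := congrArg (C : A →+* Polynomial A) root_rel
    simpa only [map_add, map_pow, map_one, map_zero] using this
  have key := gen_commute (C aX : Polynomial A) (C aY) X h2 hC
  simp only [rhoX, rhoY, add_comp, mul_comp, pow_comp, X_comp, C_comp,
    map_add, map_mul, map_pow, map_one]
  linear_combination key
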